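/- Let q be a prime power, h ≥ 2 an integer, and θ a primitive element of F_{q^h}. Then the set {a ∈ [1, q^h − 1] : θ^a − θ ∈ F_q} equals {log_θ(θ + x) : x ∈ F_q} as subsets of Z/(q^h − 1)Z (the Bose–Chowla set), and in particular is a B_h set in Z/(q^h − 1)Z with q elements. -/

import Mathlib

/-- Additive `B_h[g]` property. -/
def IsBhg {G : Type*} [AddCommMonoid G] (A : Set G) (h g : ℕ) : Prop :=
  ∀ b : G, ∀ s : Finset (Multiset G),
    (∀ m ∈ s, Multiset.card m = h ∧ (∀ x ∈ m, x ∈ A) ∧ m.sum = b) → s.card ≤ g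

open Polynomial in
lemma poly_unique {K E : Type*} [Field K] [Field E] [Algebra K E]
    (x : E) (hx : IsIntegral K x) (d : ℕ) (hd : (minpoly K x).natDegree = d)
    (t t' : Multiset K) (hct : Multiset.card t = d) (hct' : Multiset.card t' = d)
    (hprod : (t.map (fun a => x - algebraMap K E a)).prod
           = (t'.map (fun a => x - algebraMap K E a)).prod) : t = t' := by
  set P := (t.map (fun a => X - C a)).prod with hP
  set Q := (t'.map (fun a => X - C a)).prod with hQ
  have hPm : P.Monic := monic_multiset_prod_of_monic _ _ (fun a _ => monic_X_sub_C a)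
  have hQm : Q.Monic := monic_multiset_prod_of_monic _ _ (fun a _ => monic_X_sub_C a)
  have hPd : P.natDegree = d := by rw [hP, natDegree_multiset_prod_X_sub_C_eq_card, hct]
  have hQd : Q.natDegree = d := by rw [hQ, natDegree_multiset_prod_X_sub_C_eq_card, hct']
  have haP : ∀ s : Multiset K, aeval x ((s.map (fun a => X - C a)).prod)
      = (s.map (fun a => x - algebraMap K E a)).prod := by
    intro s
    rw [map_multiset_prod, Multiset.map_map]
    congr 1
    apply Multiset.map_congr rfl
    intro a _
    simp
  have hPQ : P = Q := by
    by_contra hne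
    have hsub : P - Q ≠ 0 := sub_ne_zero.mpr hne
    have hroot : aeval x (P - Q) = 0 := by
      rw [map_sub, haP, haP, hprod, sub_self]
    have hdvd := minpoly.dvd K x hroot
    have h1 : (minpoly K x).degree ≤ (P - Q).degree := degree_le_of_dvd hdvd hsub
    have h2 : (P - Q).degree < P.degree := by
      apply degree_sub_lt
      · rw [degree_eq_natDegree hPm.ne_zero, degree_eq_natDegree hQm.ne_zero, hPd, hQd]
      · exact hPm.ne_zero
      · rw [hPm.leadingCoeff, hQm.leadingCoeff]
    have h3 : (minpoly K x).degree = P.degree := by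
      rw [degree_eq_natDegree hPm.ne_zero, hPd, degree_eq_natDegree (minpoly.ne_zero hx), hd]
    exact absurd (lt_of_le_of_lt h1 h2) (by rw [h3]; exact lt_irrefl _)
  have := roots_multiset_prod_X_sub_C t
  rw [← hP, hPQ, hQ, roots_multiset_prod_X_sub_C] at this
  exact this.symm

lemma multiset_lift {α β : Type*} (f : α → β) (m : Multiset β)
    (hm : ∀ x ∈ m, ∃ a, f a = x) : ∃ t : Multiset α, m = t.map f := by
  induction m using Multiset.induction_on with
  | empty => exact ⟨0, rfl⟩
  | cons x m ih =>
    obtain ⟨t, ht⟩ := ih fun y hy => hm y (Multiset.mem_cons_of_mem hy)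
    obtain ⟨a, ha⟩ := hm x (Multiset.mem_cons_self x m)
    exact ⟨a ::ₘ t, by simp [ht, ha]⟩


theorem stmt_7 {Fq E : Type*} [Field Fq] [Fintype Fq] [Field E] [Fintype E] [Algebra Fq E]
    (q h : ℕ) (hq : Fintype.card Fq = q) (hh : 2 ≤ h) (hcard : Fintype.card E = q ^ h)
    (θ : Eˣ) (hθ : ∀ x : Eˣ, x ∈ Subgroup.zpowers θ)
    -- `e` is the discrete logarithm to base `θ`
    (e : Eˣ ≃* Multiplicative (ZMod (q ^ h - 1)))
    (he : e θ = Multiplicative.ofAdd 1) :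
    {x : ZMod (q ^ h - 1) | ∃ a : ℕ, 1 ≤ a ∧ a ≤ q ^ h - 1 ∧
        ((θ : E) ^ a - (θ : E)) ∈ Set.range (algebraMap Fq E) ∧ x = (a : ZMod (q ^ h - 1))}
      = {x : ZMod (q ^ h - 1) | ∃ a : Fq, ∃ u : Eˣ,
          (u : E) = (θ : E) + algebraMap Fq E a ∧ x = Multiplicative.toAdd (e u)} ∧
    IsBhg {x : ZMod (q ^ h - 1) | ∃ a : Fq, ∃ u : Eˣ,
        (u : E) = (θ : E) + algebraMap Fq E a ∧ x = Multiplicative.toAdd (e u)} h 1 ∧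
    Set.ncard {x : ZMod (q ^ h - 1) | ∃ a : Fq, ∃ u : Eˣ,
        (u : E) = (θ : E) + algebraMap Fq E a ∧ x = Multiplicative.toAdd (e u)} = q := by
  classical
  have hq2 : 2 ≤ q := hq ▸ Fintype.one_lt_card
  have hqlt : q < q ^ h := by
    calc q = q ^ 1 := (pow_one q).symm
    _ < q ^ h := Nat.pow_lt_pow_right hq2 (by omega)
  have hcardU : Fintype.card Eˣ = q ^ h - 1 := by rw [Fintype.card_units, hcard]
  have hord : orderOf θ = q ^ h - 1 := by
    rw [orderOf_eq_card_of_forall_mem_zpowers hθ, Nat.card_eq_fintype_card, hcardU]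
  -- θ not in the image of Fq
  have hθnotin : ∀ c : Fq, (θ : E) ≠ algebraMap Fq E c := by
    intro c hc
    have hc0 : c ≠ 0 := by
      rintro rfl
      exact θ.ne_zero (by simpa using hc)
    have hpow : θ ^ (q - 1) = 1 := by
      apply Units.ext
      have : c ^ (q - 1) = 1 := by
        rw [← hq]; exact FiniteField.pow_card_sub_one_eq_one c hc0
      push_cast [hc, ← map_pow, this]
      simp
    have hdvd : orderOf θ ∣ q - 1 := orderOf_dvd_of_pow_eq_one hpow
    rw [hord] at hdvd
    have := Nat.le_of_dvd (by omega) hdvd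
    omega
  have hne0 : ∀ a : Fq, (θ : E) + algebraMap Fq E a ≠ 0 := by
    intro a h0
    exact hθnotin (-a) (by rw [map_neg]; linear_combination h0)
  -- finrank
  have hfin : FiniteDimensional Fq E := Module.Finite.of_finite
  have hfr : Module.finrank Fq E = h := by
    have hc := Module.card_eq_pow_finrank (K := Fq) (V := E)
    rw [hq, hcard] at hc
    exact Nat.pow_right_injective hq2 hc.symm
  have htop : IntermediateField.adjoin Fq {((θ : E) : E)} = ⊤ := by
    rw [eq_top_iff]
    rintro x -
    rcases eq_or_ne x 0 with rfl | hx
    · exact zero_mem _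
    · obtain ⟨k, hk⟩ := hθ (Units.mk0 x hx)
      have hxk : x = (θ : E) ^ k := by
        have := congrArg Units.val hk
        simpa using this.symm
      rw [hxk]
      exact zpow_mem (IntermediateField.mem_adjoin_simple_self Fq _) k
  have hint : IsIntegral Fq ((θ : E) : E) := IsIntegral.of_finite Fq _
  have hdeg : (minpoly Fq ((θ : E) : E)).natDegree = h := by
    have h1 := IntermediateField.adjoin.finrank hint
    rw [htop, IntermediateField.finrank_top', hfr] at h1
    exact h1.symm
  -- the map
  set u : Fq → Eˣ := fun a => Units.mk0 _ (hne0 a) with hu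
  set f : Fq → ZMod (q ^ h - 1) := fun a => Multiplicative.toAdd (e (u a)) with hf
  have hfinj : Function.Injective f := by
    intro a b hab
    have h1 : e (u a) = e (u b) := Multiplicative.toAdd.injective hab
    have h2 : u a = u b := e.injective h1
    have h3 := congrArg Units.val h2
    simp only [hu, Units.val_mk0] at h3
    exact (algebraMap Fq E).injective (by linear_combination h3)
  have hA : {x : ZMod (q ^ h - 1) | ∃ a : Fq, ∃ u' : Eˣ,
      (u' : E) = (θ : E) + algebraMap Fq E a ∧ x = Multiplicative.toAdd (e u')} = Set.range f := by
    ext x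
    constructor
    · rintro ⟨a, u', hu', rfl⟩
      refine ⟨a, ?_⟩
      have : u' = u a := Units.ext (by simp [hu, hu'])
      simp [hf, this]
    · rintro ⟨a, rfl⟩
      exact ⟨a, u a, by simp [hu], rfl⟩
  haveI : NeZero (q ^ h - 1) := ⟨by omega⟩
  have hL : ∀ t : Multiset Fq, e ((t.map u).prod)
      = Multiplicative.ofAdd ((t.map f).sum) := by
    intro t
    induction t using Multiset.induction_on with
    | empty => simp
    | cons a t ih =>
      rw [Multiset.map_cons, Multiset.map_cons, Multiset.prod_cons, Multiset.sum_cons,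
        map_mul, ih, ofAdd_add]
      simp [hf]
  refine ⟨?_, ?_, ?_⟩
  · ext x
    simp only [Set.mem_setOf_eq]
    constructor
    · rintro ⟨a, ha1, ha2, ⟨c, hc⟩, rfl⟩
      refine ⟨c, θ ^ a, by rw [Units.val_pow_eq_pow_val]; linear_combination -hc, ?_⟩
      rw [map_pow, he]
      simp [toAdd_pow, nsmul_eq_mul]
    · rintro ⟨a, u', hu', rfl⟩
      set z := Multiplicative.toAdd (e u') with hz
      have hzcast : ((z.val : ℕ) : ZMod (q ^ h - 1)) = z := ZMod.natCast_rightInverse z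
      have hzne : z ≠ 0 := by
        intro h0
        have : u' = 1 := by
          apply e.injective
          rw [← ofAdd_toAdd (e u'), ← hz, h0]
          simp
        rw [this, Units.val_one] at hu'
        exact hθnotin (1 - a) (by rw [map_sub, map_one]; linear_combination -hu')
      have hθz : θ ^ z.val = u' := by
        apply e.injective
        rw [map_pow, he, ← ofAdd_toAdd (e u'), ← hz]
        rw [← ofAdd_nsmul]
        congr 1
        rw [nsmul_eq_mul, mul_one, hzcast]
      refine ⟨z.val, ?_, le_of_lt (ZMod.val_lt z), ⟨a, ?_⟩, hzcast.symm⟩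
      · rcases Nat.eq_zero_or_pos z.val with h0 | h1
        · exact absurd ((ZMod.val_eq_zero z).mp h0) hzne
        · exact h1
      · have := congrArg Units.val hθz
        rw [Units.val_pow_eq_pow_val, hu'] at this
        linear_combination -this
  · rw [hA]
    intro b s hs
    rw [Finset.card_le_one]
    intro m hm m' hm'
    obtain ⟨hmc, hmA, hms⟩ := hs m hm
    obtain ⟨hmc', hmA', hms'⟩ := hs m' hm'
    obtain ⟨t, rfl⟩ := multiset_lift f m fun x hx => hmA x hx
    obtain ⟨t', rfl⟩ := multiset_lift f m' fun x hx => hmA' x hx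
    have hsum : (t.map f).sum = (t'.map f).sum := hms.trans hms'.symm
    have hprodU : (t.map u).prod = (t'.map u).prod :=
      e.injective (by rw [hL, hL, hsum])
    have hprodE : (t.map (fun a => (θ : E) + algebraMap Fq E a)).prod
        = (t'.map (fun a => (θ : E) + algebraMap Fq E a)).prod := by
      have h2 := congrArg (Units.coeHom E) hprodU
      rw [map_multiset_prod, map_multiset_prod, Multiset.map_map, Multiset.map_map] at h2
      simpa [hu, Function.comp_def] using h2
    have hneg : ∀ s : Multiset Fq, s.map (fun a => (θ : E) + algebraMap Fq E a)
        = (s.map (fun a : Fq => -a)).map (fun a => (θ : E) - algebraMap Fq E a) := by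
      intro s
      rw [Multiset.map_map]
      apply Multiset.map_congr rfl
      intro a _
      simp [sub_neg_eq_add]
    have hteq := poly_unique ((θ : E) : E) hint h hdeg
      (t.map (fun a : Fq => -a)) (t'.map (fun a : Fq => -a))
      (by rw [Multiset.card_map]; rw [Multiset.card_map] at hmc; exact hmc)
      (by rw [Multiset.card_map]; rw [Multiset.card_map] at hmc'; exact hmc')
      (by rw [← hneg, ← hneg]; exact hprodE)
    have : t = t' := Multiset.map_injective neg_injective hteq
    rw [this]
  · rw [hA, ← Set.image_univ, Set.ncard_image_of_injective _ hfinj, Set.ncard_univ,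
      Nat.card_eq_fintype_card, hq]
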